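/- arXiv:1608.00154 — 2 statements merged into one kernel-verified Lean document; each statement's English description precedes it below -/
import Mathlib

section
/- Let $k_0, L, \sigma, l_c, r_0 > 0$ and define the quadratic covariance approximation $C(x) = \sigma^2 l_c(1 - |x|^2/(2l_c^2))$. Then the Gaussian integral $$\frac{r_0^2}{4\pi}\int_{\mathbb{R}^2}\exp\Big(-\frac{r_0^2|\xi|^2}{4} + \frac{k_0^2}{4}\int_0^L\big[C(x - \xi z/k_0) - C(0)\big]dz\Big)d\xi$$ equals $$\frac{1}{1 + \frac{\sigma^2 L^3}{6 r_0^2 l_c}}\exp\Big(-\frac{1 + \frac{\sigma^2 L^3}{24 r_0^2 l_c}}{1 + \frac{\sigma^2 L^3}{6 r_0^2 l_c}}\cdot\frac{\sigma^2 k_0^2 L}{8 l_c}|x|^2\Big)$$ for every $x \in \mathbb{R}^2$. -/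
open MeasureTheory Real

noncomputable section

open scoped RealInnerProductSpace

lemma gauss2d (A B : ℝ) (hA : 0 < A) (w : EuclideanSpace ℝ (Fin 2)) :
    ∫ v : EuclideanSpace ℝ (Fin 2), Real.exp (-A * ‖v‖ ^ 2 + B * ⟪w, v⟫) =
      (π / A) * Real.exp (B ^ 2 * ‖w‖ ^ 2 / (4 * A)) := by
  have h := GaussianFourier.integral_cexp_neg_mul_sq_norm_add
    (V := EuclideanSpace ℝ (Fin 2)) (b := (A : ℂ)) (by simpa using hA) (B : ℂ) w
  rw [← Complex.ofReal_inj]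
  have hfr : (Module.finrank ℝ (EuclideanSpace ℝ (Fin 2)) : ℂ) / 2 = 1 := by
    simp [finrank_euclideanSpace]
  rw [hfr, Complex.cpow_one] at h
  have h2 : ((∫ v : EuclideanSpace ℝ (Fin 2), Real.exp (-A * ‖v‖ ^ 2 + B * ⟪w, v⟫) : ℝ) : ℂ)
      = ∫ v : EuclideanSpace ℝ (Fin 2), Complex.exp (-(A:ℂ) * ‖v‖ ^ 2 + (B:ℂ) * ⟪w, v⟫) := by
    change Complex.ofRealLI (∫ v : EuclideanSpace ℝ (Fin 2),
      Real.exp (-A * ‖v‖ ^ 2 + B * ⟪w, v⟫)) = _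
    rw [← Complex.ofRealLI.integral_comp_comm]
    congr 1 with v
    show ((Real.exp (-A * ‖v‖ ^ 2 + B * ⟪w, v⟫) : ℝ) : ℂ) = _
    push_cast [Complex.ofReal_exp]
    ring_nf
  rw [h2, h]
  push_cast [Complex.ofReal_exp]
  ring

theorem stmt2 (k0 L σ lc r0 : ℝ) (hk0 : 0 < k0) (hL : 0 < L) (hσ : 0 < σ)
    (hlc : 0 < lc) (hr0 : 0 < r0)
    (C : EuclideanSpace ℝ (Fin 2) → ℝ)
    (hC : ∀ x, C x = σ ^ 2 * lc * (1 - ‖x‖ ^ 2 / (2 * lc ^ 2)))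
    (x : EuclideanSpace ℝ (Fin 2)) :
    (r0 ^ 2 / (4 * π)) *
      ∫ ξ : EuclideanSpace ℝ (Fin 2),
        Real.exp (-(r0 ^ 2 * ‖ξ‖ ^ 2 / 4)
          + (k0 ^ 2 / 4) * ∫ z in (0:ℝ)..L, (C (x - (z / k0) • ξ) - C 0))
    = (1 / (1 + σ ^ 2 * L ^ 3 / (6 * r0 ^ 2 * lc))) *
      Real.exp (-((1 + σ ^ 2 * L ^ 3 / (24 * r0 ^ 2 * lc)) /
          (1 + σ ^ 2 * L ^ 3 / (6 * r0 ^ 2 * lc))) *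
        (σ ^ 2 * k0 ^ 2 * L / (8 * lc)) * ‖x‖ ^ 2) := by
  set D : ℝ := σ ^ 2 / (2 * lc) with hD
  have hDpos : 0 < D := by positivity
  set A : ℝ := r0 ^ 2 / 4 + D * L ^ 3 / 12 with hA
  have hApos : 0 < A := by positivity
  set B : ℝ := D * k0 * L ^ 2 / 4 with hB
  -- inner z-integral
  have hint : ∀ ξ : EuclideanSpace ℝ (Fin 2),
      (∫ z in (0:ℝ)..L, (C (x - (z / k0) • ξ) - C 0)) =
        -D * (L * ‖x‖ ^ 2 - (L ^ 2 / k0) * ⟪x, ξ⟫ + (L ^ 3 / (3 * k0 ^ 2)) * ‖ξ‖ ^ 2) := by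
    intro ξ
    have hpt : ∀ z : ℝ, C (x - (z / k0) • ξ) - C 0 =
        -D * ‖x‖ ^ 2 + (2 * D * ⟪x, ξ⟫ / k0) * z + (-D * ‖ξ‖ ^ 2 / k0 ^ 2) * z ^ 2 := by
      intro z
      have hns : ‖x - (z / k0) • ξ‖ ^ 2 =
          ‖x‖ ^ 2 - 2 * ((z / k0) * ⟪x, ξ⟫) + (z / k0) ^ 2 * ‖ξ‖ ^ 2 := by
        rw [norm_sub_sq_real, real_inner_smul_right, norm_smul, Real.norm_eq_abs, mul_pow,
          sq_abs]
      rw [hC, hC, hns, norm_zero]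
      have hk0' : (k0 : ℝ) ≠ 0 := ne_of_gt hk0
      have hlc' : (lc : ℝ) ≠ 0 := ne_of_gt hlc
      rw [hD]
      field_simp
      ring
    simp only [hpt]
    have hderiv : ∀ z ∈ Set.uIcc (0:ℝ) L,
        HasDerivAt (fun z : ℝ => (-D * ‖x‖ ^ 2) * z + (2 * D * ⟪x, ξ⟫ / k0) * (z ^ 2 / 2)
          + (-D * ‖ξ‖ ^ 2 / k0 ^ 2) * (z ^ 3 / 3))
          (-D * ‖x‖ ^ 2 + (2 * D * ⟪x, ξ⟫ / k0) * z + (-D * ‖ξ‖ ^ 2 / k0 ^ 2) * z ^ 2) z := by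
      intro z _
      have h1 : HasDerivAt (fun z : ℝ => z) 1 z := hasDerivAt_id z
      have h2 : HasDerivAt (fun z : ℝ => z ^ 2) (2 * z) z := by simpa using hasDerivAt_pow 2 z
      have h3 : HasDerivAt (fun z : ℝ => z ^ 3) (3 * z ^ 2) z := by
        simpa using hasDerivAt_pow 3 z
      exact (((h1.const_mul (-D * ‖x‖ ^ 2)).add
        ((h2.div_const 2).const_mul (2 * D * ⟪x, ξ⟫ / k0))).add
        ((h3.div_const 3).const_mul (-D * ‖ξ‖ ^ 2 / k0 ^ 2))).congr_deriv (by
      ring)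
    rw [intervalIntegral.integral_eq_sub_of_hasDerivAt hderiv (by
      apply Continuous.intervalIntegrable; fun_prop)]
    have hk0' : (k0 : ℝ) ≠ 0 := ne_of_gt hk0
    field_simp
    ring
  -- rewrite the integrand
  have hexp : ∀ ξ : EuclideanSpace ℝ (Fin 2),
      Real.exp (-(r0 ^ 2 * ‖ξ‖ ^ 2 / 4)
          + (k0 ^ 2 / 4) * ∫ z in (0:ℝ)..L, (C (x - (z / k0) • ξ) - C 0))
        = Real.exp (-(D * k0 ^ 2 * L / 4) * ‖x‖ ^ 2) *
          Real.exp (-A * ‖ξ‖ ^ 2 + B * ⟪x, ξ⟫) := by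
    intro ξ
    rw [hint ξ, ← Real.exp_add]
    congr 1
    have hk0' : (k0 : ℝ) ≠ 0 := ne_of_gt hk0
    field_simp [hA, hB]
    ring
  simp only [hexp]
  rw [integral_const_mul, gauss2d A B hApos x]
  have hπ : (0 : ℝ) < π := Real.pi_pos
  have hgen : ∀ a b : ℝ, r0 ^ 2 / (4 * π) * (Real.exp a * (π / A * Real.exp b))
      = r0 ^ 2 / (4 * A) * Real.exp (a + b) := by
    intro a b
    rw [Real.exp_add]
    field_simp
  rw [hgen]
  have hden : (1 : ℝ) + σ ^ 2 * L ^ 3 / (6 * r0 ^ 2 * lc) ≠ 0 := by positivity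
  congr 1
  · rw [hA, hD]; field_simp; ring
  · rw [hA, hB, hD]; congr 1; field_simp; ring
end
end

section
/- Let $\sigma, L, l_c, k_0, r_0 > 0$ and set $\alpha_L = \frac{L}{2 k_0 r_0^2(1 + \frac{\sigma^2 L^3}{24 r_0^2 l_c})}$. With $C(x) = \sigma^2 l_c(1 - |x|^2/(2l_c^2))$, for every $b, x \in \mathbb{R}^2$: $$\frac{r_0^2}{4\pi}\int_{\mathbb{R}^2}\exp\Big(-\frac{r_0^2}{4}\big|\xi - \frac{b}{r_0^2}\big|^2 + \frac{k_0^2}{4}\int_0^L\big[C(x - \xi z/k_0) - C(0)\big]dz\Big)d\xi = \frac{1}{1 + \frac{\sigma^2 L^3}{6 r_0^2 l_c}}\exp\Big(-\frac{|b|^2}{4 r_0^2}\cdot\frac{\frac{\sigma^2 L^3}{24 l_c}}{r_0^2 + \frac{\sigma^2 L^3}{24 l_c}}\Big)\exp\Big(-\frac{|x - \alpha_L b|^2}{2 R_{tr}^2}\Big),$$ where $R_{tr}^2 = \frac{4 l_c}{\sigma^2 k_0^2 L}\cdot\frac{1 + \frac{\sigma^2 L^3}{6 r_0^2 l_c}}{1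 + \frac{\sigma^2 L^3}{24 r_0^2 l_c}}$. -/
open MeasureTheory Real Complex
open scoped RealInnerProductSpace

noncomputable section

lemma gauss2 (A : ℝ) (hA : 0 < A) (w : EuclideanSpace ℝ (Fin 2)) :
    ∫ v : EuclideanSpace ℝ (Fin 2), rexp (-A * ‖v‖ ^ 2 + ⟪w, v⟫) =
      (π / A) * rexp (‖w‖ ^ 2 / (4 * A)) := by
  have key := GaussianFourier.integral_cexp_neg_mul_sq_norm_add
    (V := EuclideanSpace ℝ (Fin 2)) (b := (A : ℂ)) (by simpa using hA) 1 w
  have h2 : ((Module.finrank ℝ (EuclideanSpace ℝ (Fin 2)) : ℂ) / 2 : ℂ) = 1 := by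
    simp [finrank_euclideanSpace_fin]
  rw [← Complex.ofReal_inj]
  calc ((∫ v : EuclideanSpace ℝ (Fin 2), rexp (-A * ‖v‖ ^ 2 + ⟪w, v⟫) : ℝ) : ℂ)
      = ∫ v : EuclideanSpace ℝ (Fin 2), ((rexp (-A * ‖v‖ ^ 2 + ⟪w, v⟫) : ℝ) : ℂ) :=
        (integral_ofReal).symm
    _ = ∫ v : EuclideanSpace ℝ (Fin 2), cexp (-(A : ℂ) * ‖v‖ ^ 2 + 1 * (⟪w, v⟫ : ℝ)) := by
        congr 1; ext v
        push_cast [Complex.ofReal_exp]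
        ring_nf
    _ = (π / A : ℂ) ^ ((Module.finrank ℝ (EuclideanSpace ℝ (Fin 2)) : ℂ) / 2 : ℂ)
          * cexp ((1 : ℂ) ^ 2 * ‖w‖ ^ 2 / (4 * A)) := key
    _ = ((π / A) * rexp (‖w‖ ^ 2 / (4 * A)) : ℝ) := by
        rw [h2, Complex.cpow_one]
        push_cast [Complex.ofReal_exp]
        ring_nf

lemma poly_int (L a c2 c3 : ℝ) :
    ∫ z in (0:ℝ)..L, (a + c2 * z + c3 * z ^ 2) = a * L + c2 * L ^ 2 / 2 + c3 * L ^ 3 / 3 := by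
  have hderiv : ∀ z ∈ Set.uIcc (0:ℝ) L,
      HasDerivAt (fun z : ℝ => a * z + c2 / 2 * z ^ 2 + c3 / 3 * z ^ 3)
        (a + c2 * z + c3 * z ^ 2) z := by
    intro z _
    have h1 := (hasDerivAt_id z).const_mul a
    have h2 := (hasDerivAt_pow 2 z).const_mul (c2 / 2)
    have h3 := (hasDerivAt_pow 3 z).const_mul (c3 / 3)
    exact ((h1.add h2).add h3).congr_deriv (by push_cast; ring)
  rw [intervalIntegral.integral_eq_sub_of_hasDerivAt hderiv
    (by apply Continuous.intervalIntegrable; continuity)]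
  ring

set_option maxHeartbeats 2000000 in
lemma exp_ident (σ L lc k0 r0 X B P : ℝ)
    (hσ : 0 < σ) (hL : 0 < L) (hlc : 0 < lc) (hk0 : 0 < k0) (hr0 : 0 < r0) :
    (1/4 * B + (σ ^ 2 * k0 * L ^ 2 / (8 * lc)) * P + (σ ^ 2 * k0 * L ^ 2 / (8 * lc)) ^ 2 * X)
        / (4 * (r0 ^ 2 / 4 + σ ^ 2 * L ^ 3 / (24 * lc)))
      + (-(B / (4 * r0 ^ 2)) - σ ^ 2 * k0 ^ 2 * L / (8 * lc) * X)
    = -(B / (4 * r0 ^ 2)) * (σ ^ 2 * L ^ 3 / (24 * lc) / (r0 ^ 2 + σ ^ 2 * L ^ 3 / (24 * lc)))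
      + -(X - 2 * ((L / (2 * k0 * r0 ^ 2 * (1 + σ ^ 2 * L ^ 3 / (24 * r0 ^ 2 * lc)))) * P)
            + (L / (2 * k0 * r0 ^ 2 * (1 + σ ^ 2 * L ^ 3 / (24 * r0 ^ 2 * lc)))) ^ 2 * B)
        / (2 * ((4 * lc / (σ ^ 2 * k0 ^ 2 * L)) *
            ((1 + σ ^ 2 * L ^ 3 / (6 * r0 ^ 2 * lc)) /
              (1 + σ ^ 2 * L ^ 3 / (24 * r0 ^ 2 * lc))))) := by
  have hD24 : (0:ℝ) < 1 + σ ^ 2 * L ^ 3 / (24 * r0 ^ 2 * lc) := by positivity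
  have hD6 : (0:ℝ) < 1 + σ ^ 2 * L ^ 3 / (6 * r0 ^ 2 * lc) := by positivity
  have hr24 : (0:ℝ) < r0 ^ 2 + σ ^ 2 * L ^ 3 / (24 * lc) := by positivity
  have hA : (0:ℝ) < r0 ^ 2 / 4 + σ ^ 2 * L ^ 3 / (24 * lc) := by positivity
  field_simp
  ring

theorem stmt7 (σ L lc k0 r0 αL Rtr2 : ℝ)
    (hσ : 0 < σ) (hL : 0 < L) (hlc : 0 < lc) (hk0 : 0 < k0) (hr0 : 0 < r0)
    (hαL : αL = L / (2 * k0 * r0 ^ 2 * (1 + σ ^ 2 * L ^ 3 / (24 * r0 ^ 2 * lc))))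
    (hRtr : Rtr2 = (4 * lc / (σ ^ 2 * k0 ^ 2 * L)) *
      ((1 + σ ^ 2 * L ^ 3 / (6 * r0 ^ 2 * lc)) /
        (1 + σ ^ 2 * L ^ 3 / (24 * r0 ^ 2 * lc))))
    (C : EuclideanSpace ℝ (Fin 2) → ℝ)
    (hC : ∀ x, C x = σ ^ 2 * lc * (1 - ‖x‖ ^ 2 / (2 * lc ^ 2)))
    (b x : EuclideanSpace ℝ (Fin 2)) :
    (r0 ^ 2 / (4 * π)) *
      ∫ ξ : EuclideanSpace ℝ (Fin 2),
        Real.exp (-(r0 ^ 2 / 4 * ‖ξ - (r0 ^ 2)⁻¹ • b‖ ^ 2)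
          + (k0 ^ 2 / 4) * ∫ z in (0:ℝ)..L, (C (x - (z / k0) • ξ) - C 0))
    = (1 / (1 + σ ^ 2 * L ^ 3 / (6 * r0 ^ 2 * lc))) *
      Real.exp (-(‖b‖ ^ 2 / (4 * r0 ^ 2)) *
        ((σ ^ 2 * L ^ 3 / (24 * lc)) / (r0 ^ 2 + σ ^ 2 * L ^ 3 / (24 * lc)))) *
      Real.exp (-‖x - αL • b‖ ^ 2 / (2 * Rtr2)) := by
  set A : ℝ := r0 ^ 2 / 4 + σ ^ 2 * L ^ 3 / (24 * lc) with hA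
  have hApos : 0 < A := by positivity
  set s : ℝ := σ ^ 2 * k0 * L ^ 2 / (8 * lc) with hs
  set w : EuclideanSpace ℝ (Fin 2) := (1/2 : ℝ) • b + s • x with hw
  set c : ℝ := -(‖b‖ ^ 2 / (4 * r0 ^ 2)) - σ ^ 2 * k0 ^ 2 * L / (8 * lc) * ‖x‖ ^ 2 with hc
  -- inner z-integral
  have hinner : ∀ ξ : EuclideanSpace ℝ (Fin 2),
      (∫ z in (0:ℝ)..L, (C (x - (z / k0) • ξ) - C 0)) =
        -(σ ^ 2 / (2 * lc)) *
          (L * ‖x‖ ^ 2 - L ^ 2 / k0 * ⟪x, ξ⟫ + L ^ 3 / (3 * k0 ^ 2) * ‖ξ‖ ^ 2) := by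
    intro ξ
    have hz : ∀ z : ℝ, C (x - (z / k0) • ξ) - C 0 =
        (-(σ ^ 2 / (2 * lc)) * ‖x‖ ^ 2) + (σ ^ 2 / (2 * lc) * (2 / k0) * ⟪x, ξ⟫) * z
          + (-(σ ^ 2 / (2 * lc)) * (1 / k0 ^ 2) * ‖ξ‖ ^ 2) * z ^ 2 := by
      intro z
      rw [hC, hC]
      have hns : ‖x - (z / k0) • ξ‖ ^ 2
          = ‖x‖ ^ 2 - 2 * ((z / k0) * ⟪x, ξ⟫) + (z / k0) ^ 2 * ‖ξ‖ ^ 2 := by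
        rw [norm_sub_sq_real, real_inner_smul_right, norm_smul]
        rw [mul_pow, Real.norm_eq_abs, _root_.sq_abs]
      rw [hns, norm_zero]
      field_simp
      ring
    simp_rw [hz]
    rw [poly_int]
    field_simp
    ring
  -- pointwise exponent
  have hpt : ∀ ξ : EuclideanSpace ℝ (Fin 2),
      (-(r0 ^ 2 / 4 * ‖ξ - (r0 ^ 2) ⁻¹ • b‖ ^ 2)
          + (k0 ^ 2 / 4) * ∫ z in (0:ℝ)..L, (C (x - (z / k0) • ξ) - C 0))
        = (-A * ‖ξ‖ ^ 2 + ⟪w, ξ⟫) + c := by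
    intro ξ
    rw [hinner ξ]
    have h1 : ‖ξ - (r0 ^ 2)⁻¹ • b‖ ^ 2
        = ‖ξ‖ ^ 2 - 2 * ((r0 ^ 2)⁻¹ * ⟪ξ, b⟫) + ((r0 ^ 2)⁻¹) ^ 2 * ‖b‖ ^ 2 := by
      rw [norm_sub_sq_real, real_inner_smul_right, norm_smul]
      rw [mul_pow, Real.norm_eq_abs, _root_.sq_abs]
    have h2 : ⟪w, ξ⟫ = (1/2) * ⟪b, ξ⟫ + s * ⟪x, ξ⟫ := by
      rw [hw, inner_add_left, real_inner_smul_left, real_inner_smul_left]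
    rw [h1, h2, real_inner_comm ξ b, hc, hA, hs]
    field_simp
    ring
  simp_rw [hpt, Real.exp_add, integral_mul_const, ← Real.exp_add]
  rw [gauss2 A hApos w]
  have hwsq : ‖w‖ ^ 2 = 1/4 * ‖b‖ ^ 2 + s * ⟪x, b⟫ + s ^ 2 * ‖x‖ ^ 2 := by
    rw [hw, norm_add_sq_real, real_inner_smul_left, real_inner_smul_right,
      norm_smul, norm_smul, mul_pow, mul_pow, Real.norm_eq_abs, Real.norm_eq_abs,
      _root_.sq_abs, _root_.sq_abs, real_inner_comm b x]
    ring
  have hxab : ‖x - αL • b‖ ^ 2 = ‖x‖ ^ 2 - 2 * (αL * ⟪x, b⟫) + αL ^ 2 * ‖b‖ ^ 2 := by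
    rw [norm_sub_sq_real, real_inner_smul_right, norm_smul, mul_pow,
      Real.norm_eq_abs, _root_.sq_abs]
  have hD24 : (0:ℝ) < 1 + σ ^ 2 * L ^ 3 / (24 * r0 ^ 2 * lc) := by positivity
  have hD6 : (0:ℝ) < 1 + σ ^ 2 * L ^ 3 / (6 * r0 ^ 2 * lc) := by positivity
  have hr24 : (0:ℝ) < r0 ^ 2 + σ ^ 2 * L ^ 3 / (24 * lc) := by positivity
  have hπ : (0:ℝ) < π := Real.pi_pos
  have hscal : r0 ^ 2 / (4 * π) * (π / A) = 1 / (1 + σ ^ 2 * L ^ 3 / (6 * r0 ^ 2 * lc)) := by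
    rw [hA]
    rw [div_mul_div_comm, div_eq_div_iff (by positivity) (by positivity)]
    field_simp
    ring
  have hexp : ‖w‖ ^ 2 / (4 * A) + c =
      -(‖b‖ ^ 2 / (4 * r0 ^ 2)) * (σ ^ 2 * L ^ 3 / (24 * lc) / (r0 ^ 2 + σ ^ 2 * L ^ 3 / (24 * lc)))
      + -‖x - αL • b‖ ^ 2 / (2 * Rtr2) := by
    rw [hwsq, hxab, hc, hA, hs, hαL, hRtr]
    exact exp_ident σ L lc k0 r0 (‖x‖ ^ 2) (‖b‖ ^ 2) ⟪x, b⟫ hσ hL hlc hk0 hr0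
  calc r0 ^ 2 / (4 * π) * (π / A * rexp (‖w‖ ^ 2 / (4 * A)) * rexp c)
      = (r0 ^ 2 / (4 * π) * (π / A)) * rexp (‖w‖ ^ 2 / (4 * A) + c) := by
        rw [Real.exp_add]; ring
    _ = _ := by
        rw [hscal, hexp, Real.exp_add]; ring
end
end
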